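/- (Convergence of the regularizing ART variant.) Let A be a real M × N matrix all of whose rows a₁ᵀ, …, a_Mᵀ are nonzero, let b ∈ ℝ^M, σ > 0, and fix a relaxation parameter λ with 0 < λ < 2. Define sequences (u⁽ⁿ⁾) in ℝ^M and (x⁽ⁿ⁾) in ℝ^N by u⁽⁰⁾ = 0, x⁽⁰⁾ = 0, and for each n ∈ ℕ, with jₙ = (n mod M) + 1 and γₙ = λ (σ (b_{jₙ} − a_{jₙ}ᵀ x⁽ⁿ⁾) − u⁽ⁿ⁾_{jₙ}) / (1 + σ² ‖a_{jₙ}‖²): u⁽ⁿ⁺¹⁾ = u⁽ⁿ⁾ + γₙ e_{jₙ} and x⁽ⁿ⁺¹⁾ = x⁽ⁿ⁾ + σ γₙ a_{jₙ}. Then the sequence (x⁽ⁿ⁾) converges to the unique minimizer over ℝ^N of the function x ↦ σ² ‖b − A x‖² + ‖x‖². -/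

import Mathlib

open Matrix

/-- Matrix–vector multiplication viewed as a map between Euclidean spaces. -/
noncomputable def mulVecE {M N : ℕ} (A : Matrix (Fin M) (Fin N) ℝ)
    (x : EuclideanSpace ℝ (Fin N)) : EuclideanSpace ℝ (Fin M) :=
  (WithLp.equiv 2 (Fin M → ℝ)).symm (A.mulVec ((WithLp.equiv 2 (Fin N → ℝ)) x))

/-- The `j`-th row of a matrix, viewed as a vector in Euclidean space. -/
noncomputable def rowE {M N : ℕ} (A : Matrix (Fin M) (Fin N) ℝ) (j : Fin M) :
    EuclideanSpace ℝ (Fin N) :=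
  (WithLp.equiv 2 (Fin N → ℝ)).symm (A j)

open Filter
variable {H : Type*} [NormedAddCommGroup H] [InnerProductSpace ℝ H]

local notation "⟪" x ", " y "⟫" => @inner ℝ _ _ x y

lemma step_normsq (lam : ℝ) (r w : H) (hr : r ≠ 0) :
    ‖w - ((lam * ⟪r, w⟫) / ‖r‖ ^ 2) • r‖ ^ 2
      = ‖w‖ ^ 2 - (lam * (2 - lam)) * ⟪r, w⟫ ^ 2 / ‖r‖ ^ 2 := by
  have hr2 : ‖r‖ ^ 2 ≠ 0 := pow_ne_zero _ (norm_ne_zero_iff.mpr hr)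
  rw [norm_sub_sq_real, inner_smul_right, norm_smul, mul_pow, real_inner_comm w r,
    Real.norm_eq_abs, sq_abs]
  field_simp
  ring

lemma kaczmarz [FiniteDimensional ℝ H] (M : ℕ) (hM : 0 < M)
    (r : Fin M → H) (hr : ∀ i, r i ≠ 0) (β : Fin M → ℝ)
    (lam : ℝ) (hlam₀ : 0 < lam) (hlam₂ : lam < 2)
    (s : H) (hs : ∀ i, ⟪r i, s⟫ = β i)
    (hsV : s ∈ Submodule.span ℝ (Set.range r))
    (j : ℕ → Fin M) (hj : ∀ n : ℕ, (j n : ℕ) = n % M)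
    (z : ℕ → H) (hz0 : z 0 = 0)
    (hrec : ∀ n, z (n + 1)
      = z n + ((lam * (β (j n) - ⟪r (j n), z n⟫)) / ‖r (j n)‖ ^ 2) • r (j n)) :
    Tendsto z atTop (nhds s) := by
  classical
  set V : Submodule ℝ H := Submodule.span ℝ (Set.range r) with hV
  -- the one-step linear maps
  set L : Fin M → H →L[ℝ] H := fun i =>
    ContinuousLinearMap.id ℝ H - (lam / ‖r i‖ ^ 2) • ((innerSL ℝ (r i)).smulRight (r i)) with hLdef
  have hL : ∀ i (w : H), L i w = w - ((lam * ⟪r i, w⟫) / ‖r i‖ ^ 2) • r i := by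
    intro i w
    simp only [hLdef, ContinuousLinearMap.sub_apply, ContinuousLinearMap.id_apply,
      ContinuousLinearMap.smul_apply, ContinuousLinearMap.smulRight_apply, innerSL_apply_apply,
      smul_smul]
    rw [div_mul_eq_mul_div]
  have hLnormsq : ∀ i (w : H),
      ‖L i w‖ ^ 2 = ‖w‖ ^ 2 - (lam * (2 - lam)) * ⟪r i, w⟫ ^ 2 / ‖r i‖ ^ 2 := by
    intro i w; rw [hL]; exact step_normsq lam (r i) w (hr i)
  have hlam : 0 < lam * (2 - lam) := mul_pos hlam₀ (by linarith)
  have hLle : ∀ i (w : H), ‖L i w‖ ≤ ‖w‖ := by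
    intro i w
    have h2 : ‖L i w‖ ^ 2 ≤ ‖w‖ ^ 2 := by
      rw [hLnormsq]
      have : 0 ≤ (lam * (2 - lam)) * ⟪r i, w⟫ ^ 2 / ‖r i‖ ^ 2 := by positivity
      linarith
    exact (pow_le_pow_iff_left₀ (norm_nonneg _) (norm_nonneg _) two_ne_zero).mp h2
  have hLeq : ∀ i (w : H), ‖L i w‖ = ‖w‖ → L i w = w := by
    intro i w h
    have h2 : (lam * (2 - lam)) * ⟪r i, w⟫ ^ 2 / ‖r i‖ ^ 2 = 0 := by
      have := hLnormsq i w; rw [h] at this; linarith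
    have hr2 : (0:ℝ) < ‖r i‖ ^ 2 := pow_pos (norm_pos_iff.mpr (hr i)) 2
    have hz : ⟪r i, w⟫ = 0 := by
      by_contra hne
      have : 0 < (lam * (2 - lam)) * ⟪r i, w⟫ ^ 2 / ‖r i‖ ^ 2 :=
        div_pos (mul_pos hlam (pow_two_pos_of_ne_zero hne)) hr2
      linarith
    rw [hL, hz]
    simp
  have hLV : ∀ i (w : H), w ∈ V → L i w ∈ V := by
    intro i w hw
    rw [hL]
    exact V.sub_mem hw (V.smul_mem _ (Submodule.subset_span ⟨i, rfl⟩))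
  -- the error sequence
  set v : ℕ → H := fun n => z n - s with hvdef
  have hvrec : ∀ n, v (n + 1) = L (j n) (v n) := by
    intro n
    rw [hL]
    have hb : β (j n) - ⟪r (j n), z n⟫ = -⟪r (j n), v n⟫ := by
      rw [hvdef]; simp [inner_sub_right, hs (j n)]
    simp only [hvdef, hrec n, hb]
    rw [mul_neg, neg_div, neg_smul]
    abel
  have hvV : ∀ n, v n ∈ V := by
    intro n
    induction n with
    | zero => simpa [hvdef, hz0] using V.neg_mem hsV
    | succ n ih => rw [hvrec]; exact hLV _ _ ih
  have hvmono : ∀ n, ‖v (n + 1)‖ ≤ ‖v n‖ := fun n => by rw [hvrec]; exact hLle _ _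
  have hvanti : Antitone fun n => ‖v n‖ := antitone_nat_of_succ_le hvmono
  -- partial sweep products
  set P : ℕ → H →L[ℝ] H := fun n => Nat.rec (ContinuousLinearMap.id ℝ H)
    (fun n Pn => (L (j n)).comp Pn) n with hPdef
  have hP0 : P 0 = ContinuousLinearMap.id ℝ H := rfl
  have hPsucc : ∀ n, P (n + 1) = (L (j n)).comp (P n) := fun n => rfl
  have hjper : ∀ k t, j (k * M + t) = j t := by
    intro k t
    exact Fin.ext (by rw [hj, hj, Nat.add_comm, Nat.add_mul_mod_self_right])
  have hPapp : ∀ k i, v (k * M + i) = P i (v (k * M)) := by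
    intro k i
    induction i with
    | zero => simp [hP0]
    | succ i ih =>
        rw [← Nat.add_assoc, hvrec, hPsucc, ContinuousLinearMap.comp_apply, ← ih, hjper]
  have hPle : ∀ n (w : H), ‖P n w‖ ≤ ‖w‖ := by
    intro n w
    induction n with
    | zero => simp [hP0]
    | succ n ih => rw [hPsucc]; exact le_trans (hLle _ _) ih
  have hPV : ∀ n (w : H), w ∈ V → P n w ∈ V := by
    intro n w hw
    induction n with
    | zero => simpa [hP0]
    | succ n ih => rw [hPsucc]; exact hLV _ _ ih
  -- strict contraction of the full sweep on V
  have hstrict : ∀ w ∈ V, w ≠ 0 → ‖P M w‖ < ‖w‖ := by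
    intro w hwV hw0
    rcases lt_or_eq_of_le (hPle M w) with h | h
    · exact h
    · exfalso
      -- all intermediate norms are equal
      have hanti : Antitone fun n => ‖P n w‖ := by
        apply antitone_nat_of_succ_le
        intro n; rw [hPsucc]; exact hLle _ _
      have hnorm : ∀ i, i ≤ M → ‖P i w‖ = ‖w‖ := by
        intro i hi
        have h1 : ‖P i w‖ ≤ ‖w‖ := hPle i w
        have h2 : ‖P M w‖ ≤ ‖P i w‖ := hanti hi
        rw [h] at h2
        linarith
      have hfix : ∀ i, i ≤ M → P i w = w := by
        intro i hi
        induction i with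
        | zero => simp [hP0]
        | succ i ih =>
            have hI : i ≤ M := Nat.le_of_succ_le hi
            have e1 : ‖L (j i) (P i w)‖ = ‖P i w‖ := by
              rw [← ContinuousLinearMap.comp_apply, ← hPsucc, hnorm _ hi, hnorm _ hI]
            rw [hPsucc, ContinuousLinearMap.comp_apply, hLeq _ _ e1, ih hI]
      have horth : ∀ m : Fin M, ⟪r m, w⟫ = 0 := by
        intro m
        have hm : (m : ℕ) < M := m.isLt
        have hjm : j (m : ℕ) = m := Fin.ext (by rw [hj]; exact Nat.mod_eq_of_lt hm)
        have e1 : ‖L (j (m : ℕ)) (P (m : ℕ) w)‖ = ‖P (m : ℕ) w‖ := by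
          rw [← ContinuousLinearMap.comp_apply, ← hPsucc, hnorm _ hm, hnorm _ (le_of_lt hm)]
        -- from norm equality, inner product vanishes
        have h2 := hLnormsq (j (m : ℕ)) (P (m : ℕ) w)
        rw [e1] at h2
        have hr2 : (0:ℝ) < ‖r (j (m : ℕ))‖ ^ 2 := pow_pos (norm_pos_iff.mpr (hr _)) 2
        have hz : ⟪r (j (m : ℕ)), P (m : ℕ) w⟫ = 0 := by
          by_contra hne
          have : 0 < (lam * (2 - lam)) * ⟪r (j (m : ℕ)), P (m : ℕ) w⟫ ^ 2
              / ‖r (j (m : ℕ))‖ ^ 2 := div_pos (mul_pos hlam (pow_two_pos_of_ne_zero hne)) hr2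
          linarith
        rw [hfix _ (le_of_lt hm), hjm] at hz
        exact hz
      have hww : ⟪w, w⟫ = 0 := by
        have : ∀ p ∈ V, ⟪p, w⟫ = (0:ℝ) := by
          intro p hp
          refine Submodule.span_induction ?_ ?_ ?_ ?_ hp
          · rintro p ⟨m, rfl⟩; exact horth m
          · simp
          · intro a b _ _ ha hb; rw [inner_add_left, ha, hb, add_zero]
          · intro c a _ ha; rw [inner_smul_left, ha, mul_zero]
        exact this w hwV
      exact hw0 (inner_self_eq_zero.mp hww)
  -- contraction constant on V
  obtain ⟨q, hq0, hq1, hq⟩ : ∃ q : ℝ, 0 ≤ q ∧ q < 1 ∧ ∀ w ∈ V, ‖P M w‖ ≤ q * ‖w‖ := by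
    by_cases hVbot : ∀ w ∈ V, w = (0 : H)
    · refine ⟨0, le_refl _, one_pos, ?_⟩
      intro w hw; rw [hVbot w hw]; simp
    · push_neg at hVbot
      obtain ⟨w₁, hw₁V, hw₁0⟩ := hVbot
      set K : Set H := (V : Set H) ∩ Metric.sphere 0 1 with hK
      have hKne : K.Nonempty := by
        refine ⟨‖w₁‖⁻¹ • w₁, V.smul_mem _ hw₁V, ?_⟩
        rw [mem_sphere_zero_iff_norm, norm_smul, norm_inv, norm_norm,
          inv_mul_cancel₀ (norm_ne_zero_iff.mpr hw₁0)]
      have hKcompact : IsCompact K := by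
        apply Metric.isCompact_of_isClosed_isBounded
        · exact IsClosed.inter (Submodule.closed_of_finiteDimensional V) Metric.isClosed_sphere
        · exact (Metric.isBounded_sphere).subset Set.inter_subset_right
      obtain ⟨w₀, hw₀K, hmax'⟩ := hKcompact.exists_isMaxOn hKne
        ((continuous_norm.comp (P M).continuous).continuousOn)
      have hmax : ∀ w ∈ K, ‖P M w‖ ≤ ‖P M w₀‖ := fun w hw => hmax' hw
      obtain ⟨hw₀V, hw₀S⟩ := hw₀K
      rw [mem_sphere_zero_iff_norm] at hw₀S
      have hw₀0 : w₀ ≠ 0 := by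
        intro h; rw [h, norm_zero] at hw₀S; exact one_ne_zero hw₀S.symm
      refine ⟨‖P M w₀‖, norm_nonneg _, ?_, ?_⟩
      · have := hstrict w₀ hw₀V hw₀0; rwa [hw₀S] at this
      · intro w hw
        by_cases hw0 : w = 0
        · simp [hw0]
        · have hwn : ‖w‖ ≠ 0 := norm_ne_zero_iff.mpr hw0
          have hmem : ‖w‖⁻¹ • w ∈ K := by
            refine ⟨V.smul_mem _ hw, ?_⟩
            rw [mem_sphere_zero_iff_norm, norm_smul, norm_inv, norm_norm,
              inv_mul_cancel₀ hwn]
          have h1 := hmax _ hmem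
          simp only [Function.comp_apply, _root_.map_smul, norm_smul, norm_inv, norm_norm] at h1
          calc ‖P M w‖ = ‖w‖ * (‖w‖⁻¹ * ‖P M w‖) := by field_simp
            _ ≤ ‖w‖ * ‖P M w₀‖ := mul_le_mul_of_nonneg_left h1 (norm_nonneg w)
            _ = ‖P M w₀‖ * ‖w‖ := mul_comm _ _
  -- geometric decay along full sweeps
  have hgeo : ∀ k, ‖v (k * M)‖ ≤ q ^ k * ‖v 0‖ := by
    intro k
    induction k with
    | zero => simp
    | succ k ih =>
        have e1 : (k + 1) * M = k * M + M := by ring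
        have e2 : v ((k + 1) * M) = P M (v (k * M)) := by rw [e1, hPapp k M]
        calc ‖v ((k + 1) * M)‖ = ‖P M (v (k * M))‖ := by rw [e2]
          _ ≤ q * ‖v (k * M)‖ := hq _ (hvV _)
          _ ≤ q * (q ^ k * ‖v 0‖) := mul_le_mul_of_nonneg_left ih hq0
          _ = q ^ (k + 1) * ‖v 0‖ := by ring
  have hbound : ∀ n, ‖v n‖ ≤ q ^ (n / M) * ‖v 0‖ := by
    intro n
    calc ‖v n‖ ≤ ‖v ((n / M) * M)‖ := hvanti (Nat.div_mul_le_self n M)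
      _ ≤ q ^ (n / M) * ‖v 0‖ := hgeo _
  have hdiv : Tendsto (fun n : ℕ => n / M) atTop atTop := by
    apply tendsto_atTop_atTop.mpr
    intro c
    exact ⟨c * M, fun n hn => (Nat.le_div_iff_mul_le hM).mpr hn⟩
  have hq' : Tendsto (fun k : ℕ => q ^ k) atTop (nhds 0) :=
    tendsto_pow_atTop_nhds_zero_of_lt_one hq0 hq1
  have hub : Tendsto (fun n : ℕ => q ^ (n / M) * ‖v 0‖) atTop (nhds 0) := by
    simpa using (hq'.comp hdiv).mul_const ‖v 0‖
  have hv0 : Tendsto (fun n => ‖v n‖) atTop (nhds 0) :=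
    squeeze_zero (fun n => norm_nonneg _) hbound hub
  rw [tendsto_iff_norm_sub_tendsto_zero]
  exact hv0
section application
variable {M N : ℕ} (A : Matrix (Fin M) (Fin N) ℝ)

lemma rowE_inner (i : Fin M) (y : EuclideanSpace ℝ (Fin N)) :
    ⟪rowE A i, y⟫ = ∑ k, A i k * y k := by
  simp [rowE, PiLp.inner_apply, RCLike.inner_apply, conj_trivial, mul_comm]

lemma mulVecE_apply (y : EuclideanSpace ℝ (Fin N)) (i : Fin M) :
    mulVecE A y i = ⟪rowE A i, y⟫ := by
  rw [rowE_inner]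
  rfl

lemma exists_normal (b : EuclideanSpace ℝ (Fin M)) (σ : ℝ) :
    ∃ xs : EuclideanSpace ℝ (Fin N),
      xs = ∑ i, (σ ^ 2 * (b i - ⟪rowE A i, xs⟫)) • rowE A i := by
  classical
  set F := EuclideanSpace ℝ (Fin N)
  set a : Fin M → F := fun i => rowE A i with ha
  set B : F →L[ℝ] F := ContinuousLinearMap.id ℝ F
    + ∑ i, (σ ^ 2 : ℝ) • ((innerSL ℝ (a i)).smulRight (a i)) with hB
  have hBapp : ∀ y, B y = y + ∑ i, (σ ^ 2 * ⟪a i, y⟫) • a i := by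
    intro y
    simp [hB, ContinuousLinearMap.sum_apply, smul_smul]
  have hinj : Function.Injective B := by
    rw [injective_iff_map_eq_zero]
    intro y hy
    have h1 : ⟪y, B y⟫ = ‖y‖ ^ 2 + σ ^ 2 * ∑ i, ⟪a i, y⟫ ^ 2 := by
      rw [hBapp, inner_add_right, real_inner_self_eq_norm_sq, inner_sum]
      simp only [real_inner_smul_right]
      rw [Finset.mul_sum]
      congr 1
      refine Finset.sum_congr rfl fun i _ => ?_
      rw [real_inner_comm y (a i)]; ring
    rw [hy, inner_zero_right] at h1
    have h2 : (0:ℝ) ≤ σ ^ 2 * ∑ i, ⟪a i, y⟫ ^ 2 := by positivity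
    have h3 : ‖y‖ ^ 2 ≤ 0 := by linarith
    have h4 : ‖y‖ = 0 := by nlinarith [norm_nonneg y]
    exact norm_eq_zero.mp h4
  have hsurj : Function.Surjective B :=
    LinearMap.surjective_of_injective (f := (B : F →ₗ[ℝ] F)) hinj
  obtain ⟨xs, hxs⟩ := hsurj (∑ i, (σ ^ 2 * b i) • a i)
  refine ⟨xs, ?_⟩
  rw [hBapp] at hxs
  have h5 : ∑ i, (σ ^ 2 * (b i - ⟪a i, xs⟫)) • a i
      = ∑ i, (σ ^ 2 * b i) • a i - ∑ i, (σ ^ 2 * ⟪a i, xs⟫) • a i := by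
    rw [← Finset.sum_sub_distrib]
    refine Finset.sum_congr rfl fun i _ => ?_
    rw [← sub_smul, ← mul_sub]
  rw [h5, ← hxs]
  abel

lemma key_identity (b : EuclideanSpace ℝ (Fin M)) (σ : ℝ)
    (xs : EuclideanSpace ℝ (Fin N))
    (hxs : xs = ∑ i, (σ ^ 2 * (b i - ⟪rowE A i, xs⟫)) • rowE A i)
    (y : EuclideanSpace ℝ (Fin N)) :
    σ ^ 2 * ‖b - mulVecE A y‖ ^ 2 + ‖y‖ ^ 2
      = σ ^ 2 * ‖b - mulVecE A xs‖ ^ 2 + ‖xs‖ ^ 2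
        + (σ ^ 2 * ‖mulVecE A (y - xs)‖ ^ 2 + ‖y - xs‖ ^ 2) := by
  classical
  set d : EuclideanSpace ℝ (Fin N) := y - xs with hd
  have hyd : y = xs + d := by rw [hd]; abel
  have hAd : mulVecE A y = mulVecE A xs + mulVecE A d := by
    ext i
    have h1 : (mulVecE A xs + mulVecE A d) i = mulVecE A xs i + mulVecE A d i := rfl
    rw [h1, mulVecE_apply, mulVecE_apply, mulVecE_apply, hyd, inner_add_right]
  have hby : b - mulVecE A y = (b - mulVecE A xs) - mulVecE A d := by
    rw [hAd]; abel
  have hsub : ∀ i, (b - mulVecE A xs) i = b i - ⟪rowE A i, xs⟫ := by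
    intro i
    have h1 : (b - mulVecE A xs) i = b i - mulVecE A xs i := rfl
    rw [h1, mulVecE_apply]
  have hcross : ⟪xs, d⟫ = σ ^ 2 * ⟪b - mulVecE A xs, mulVecE A d⟫ := by
    have hrhs : ⟪b - mulVecE A xs, mulVecE A d⟫
        = ∑ i, (b i - ⟪rowE A i, xs⟫) * ⟪rowE A i, d⟫ := by
      rw [PiLp.inner_apply]
      refine Finset.sum_congr rfl fun i _ => ?_
      rw [RCLike.inner_apply, conj_trivial, hsub, mulVecE_apply]
      ring
    have hlhs : ⟪xs, d⟫ = ∑ i, (σ ^ 2 * (b i - ⟪rowE A i, xs⟫)) * ⟪rowE A i, d⟫ := by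
      conv_lhs => rw [hxs]
      rw [sum_inner]
      refine Finset.sum_congr rfl fun i _ => ?_
      rw [real_inner_smul_left]
    rw [hlhs, hrhs, Finset.mul_sum]
    refine Finset.sum_congr rfl fun i _ => ?_
    ring
  have e1 : ‖b - mulVecE A y‖ ^ 2 = ‖b - mulVecE A xs‖ ^ 2
      - 2 * ⟪b - mulVecE A xs, mulVecE A d⟫ + ‖mulVecE A d‖ ^ 2 := by
    rw [hby, norm_sub_sq_real]
  have e2 : ‖y‖ ^ 2 = ‖xs‖ ^ 2 + 2 * ⟪xs, d⟫ + ‖d‖ ^ 2 := by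
    rw [hyd, norm_add_sq_real]
  rw [e1, e2]
  linear_combination 2 * hcross

end application

section main

lemma withlp_snd_norm_le {α β : Type*} [SeminormedAddCommGroup α] [SeminormedAddCommGroup β]
    (w : WithLp 2 (α × β)) : ‖w.snd‖ ≤ ‖w‖ := by
  have h2 := WithLp.prod_norm_sq_eq_of_L2 w
  have h3 : ‖w.snd‖ ^ 2 ≤ ‖w‖ ^ 2 := by nlinarith [sq_nonneg ‖w.fst‖]
  exact (pow_le_pow_iff_left₀ (norm_nonneg _) (norm_nonneg _) two_ne_zero).mp h3

lemma withlp_prod_ext {p : ENNReal} {α β : Type*} {x y : WithLp p (α × β)}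
    (h1 : x.fst = y.fst) (h2 : x.snd = y.snd) : x = y := WithLp.ofLp_injective p (Prod.ext h1 h2)

lemma withlp_fst_sum {p : ENNReal} {α β ι : Type*} [AddCommGroup α] [AddCommGroup β]
    (s : Finset ι) (f : ι → WithLp p (α × β)) :
    (∑ i ∈ s, f i).fst = ∑ i ∈ s, (f i).fst := by
  classical
  induction s using Finset.cons_induction with
  | empty => rfl
  | cons i s hi ih => rw [Finset.sum_cons, Finset.sum_cons, WithLp.add_fst, ih]

lemma withlp_snd_sum {p : ENNReal} {α β ι : Type*} [AddCommGroup α] [AddCommGroup β]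
    (s : Finset ι) (f : ι → WithLp p (α × β)) :
    (∑ i ∈ s, f i).snd = ∑ i ∈ s, (f i).snd := by
  classical
  induction s using Finset.cons_induction with
  | empty => rfl
  | cons i s hi ih => rw [Finset.sum_cons, Finset.sum_cons, WithLp.add_snd, ih]

lemma euclid_sum_apply {𝕜 : Type*} [RCLike 𝕜] {n : Type*} [Fintype n] {ι : Type*}
    (s : Finset ι) (f : ι → EuclideanSpace 𝕜 n) (m : n) :
    (∑ i ∈ s, f i) m = ∑ i ∈ s, f i m := by
  classical
  induction s using Finset.cons_induction with
  | empty => rfl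
  | cons i s hi ih =>
      rw [Finset.sum_cons, Finset.sum_cons, ← ih]
      rfl

/-- Convergence of the regularizing cyclic ART variant: with nonzero rows `a_j` of `A`,
`σ > 0`, `0 < λ < 2`, starting from `u⁽⁰⁾ = 0`, `x⁽⁰⁾ = 0` and cycling through the rows
(`jₙ = (n mod M) + 1` in 1-based indexing) with the updates
`u⁽ⁿ⁺¹⁾ = u⁽ⁿ⁾ + γₙ e_{jₙ}`, `x⁽ⁿ⁺¹⁾ = x⁽ⁿ⁾ + σ γₙ a_{jₙ}`, where
`γₙ = λ (σ (b_{jₙ} − a_{jₙ}ᵀ x⁽ⁿ⁾) − u⁽ⁿ⁾_{jₙ}) / (1 + σ² ‖a_{jₙ}‖²)`, the sequence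
`(x⁽ⁿ⁾)` converges to the unique minimizer of `x ↦ σ²‖b − A x‖² + ‖x‖²`. -/
theorem stmt_13 (M N : ℕ) (hM : 0 < M)
    (A : Matrix (Fin M) (Fin N) ℝ) (hrows : ∀ i : Fin M, A i ≠ 0)
    (b : EuclideanSpace ℝ (Fin M)) (σ : ℝ) (hσ : 0 < σ)
    (lam : ℝ) (hlam₀ : 0 < lam) (hlam₂ : lam < 2)
    (j : ℕ → Fin M) (hj : ∀ n : ℕ, (j n : ℕ) = n % M)
    (u : ℕ → EuclideanSpace ℝ (Fin M)) (x : ℕ → EuclideanSpace ℝ (Fin N))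
    (γ : ℕ → ℝ)
    (hγ : ∀ n : ℕ, γ n =
      lam * (σ * (b (j n) - ∑ k, A (j n) k * x n k) - u n (j n)) /
        (1 + σ ^ 2 * ‖rowE A (j n)‖ ^ 2))
    (hu0 : u 0 = 0) (hx0 : x 0 = 0)
    (hur : ∀ n : ℕ, u (n + 1) = u n + γ n • EuclideanSpace.single (j n) (1 : ℝ))
    (hxr : ∀ n : ℕ, x (n + 1) = x n + (σ * γ n) • rowE A (j n)) :
    ∃ xs : EuclideanSpace ℝ (Fin N),
      (∀ y : EuclideanSpace ℝ (Fin N),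
        σ ^ 2 * ‖b - mulVecE A xs‖ ^ 2 + ‖xs‖ ^ 2 ≤
          σ ^ 2 * ‖b - mulVecE A y‖ ^ 2 + ‖y‖ ^ 2) ∧
      (∀ y : EuclideanSpace ℝ (Fin N),
        (∀ z : EuclideanSpace ℝ (Fin N),
          σ ^ 2 * ‖b - mulVecE A y‖ ^ 2 + ‖y‖ ^ 2 ≤
            σ ^ 2 * ‖b - mulVecE A z‖ ^ 2 + ‖z‖ ^ 2) → y = xs) ∧
      Filter.Tendsto x Filter.atTop (nhds xs) := by
  classical
  obtain ⟨xs, hxs⟩ := exists_normal A b σ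
  have hmin : ∀ y, σ ^ 2 * ‖b - mulVecE A xs‖ ^ 2 + ‖xs‖ ^ 2
      ≤ σ ^ 2 * ‖b - mulVecE A y‖ ^ 2 + ‖y‖ ^ 2 := by
    intro y
    have h := key_identity A b σ xs hxs y
    have h2 : (0:ℝ) ≤ σ ^ 2 * ‖mulVecE A (y - xs)‖ ^ 2 + ‖y - xs‖ ^ 2 := by positivity
    linarith
  refine ⟨xs, hmin, ?_, ?_⟩
  · intro y hy
    have h1 := hy xs
    have h := key_identity A b σ xs hxs y
    have h2 : (0:ℝ) ≤ σ ^ 2 * ‖mulVecE A (y - xs)‖ ^ 2 := by positivity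
    have h3 : ‖y - xs‖ ^ 2 ≤ 0 := by linarith
    have h4 : ‖y - xs‖ = 0 := by nlinarith [norm_nonneg (y - xs)]
    exact sub_eq_zero.mp (norm_eq_zero.mp h4)
  · -- convergence part
    set r : Fin M → WithLp 2 ((EuclideanSpace ℝ (Fin M)) × (EuclideanSpace ℝ (Fin N))) := fun i =>
      (WithLp.equiv 2 _).symm (EuclideanSpace.single i (1:ℝ), σ • rowE A i) with hrdef
    set s : WithLp 2 ((EuclideanSpace ℝ (Fin M)) × (EuclideanSpace ℝ (Fin N))) :=
      (WithLp.equiv 2 _).symm (σ • (b - mulVecE A xs), xs) with hsdef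
    set z : ℕ → WithLp 2 ((EuclideanSpace ℝ (Fin M)) × (EuclideanSpace ℝ (Fin N))) :=
      fun n => (WithLp.equiv 2 _).symm (u n, x n) with hzdef
    have hrfst : ∀ i, (r i).fst = EuclideanSpace.single i (1:ℝ) := fun i => rfl
    have hrsnd : ∀ i, (r i).snd = σ • rowE A i := fun i => rfl
    have hzfst : ∀ n, (z n).fst = u n := fun n => rfl
    have hzsnd : ∀ n, (z n).snd = x n := fun n => rfl
    have hsfst : s.fst = σ • (b - mulVecE A xs) := rfl
    have hssnd : s.snd = xs := rfl
    have hrn : ∀ i, ‖r i‖ ^ 2 = 1 + σ ^ 2 * ‖rowE A i‖ ^ 2 := by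
      intro i
      rw [WithLp.prod_norm_sq_eq_of_L2, hrfst, hrsnd, EuclideanSpace.norm_single, norm_one,
        norm_smul, mul_pow, Real.norm_eq_abs, sq_abs, one_pow]
    have hrne : ∀ i, r i ≠ 0 := by
      intro i h
      have h1 := hrn i
      rw [h, norm_zero] at h1
      nlinarith [sq_nonneg (σ * ‖rowE A i‖)]
    have hinner : ∀ (i : Fin M)
        (w : WithLp 2 ((EuclideanSpace ℝ (Fin M)) × (EuclideanSpace ℝ (Fin N)))),
        ⟪r i, w⟫ = w.fst i + σ * ⟪rowE A i, w.snd⟫ := by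
      intro i w
      rw [WithLp.prod_inner_apply]
      change ⟪(r i).fst, w.fst⟫ + ⟪(r i).snd, w.snd⟫ = _
      rw [hrfst, hrsnd, real_inner_smul_left,
        EuclideanSpace.inner_single_left]
      simp
    have hsolves : ∀ i, ⟪r i, s⟫ = σ * b i := by
      intro i
      rw [hinner, hsfst, hssnd]
      have h3 : (σ • (b - mulVecE A xs)) i = σ * (b i - ⟪rowE A i, xs⟫) := by
        have h5 : (σ • (b - mulVecE A xs)) i = σ * ((b - mulVecE A xs) i) := rfl
        have h4 : (b - mulVecE A xs) i = b i - mulVecE A xs i := rfl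
        rw [h5, h4, mulVecE_apply]
      rw [h3]
      ring
    have hsV : s ∈ Submodule.span ℝ (Set.range r) := by
      have hrep : s = ∑ i, (σ * (b i - ⟪rowE A i, xs⟫)) • r i := by
        apply withlp_prod_ext
        · rw [withlp_fst_sum, hsfst]
          ext m
          rw [euclid_sum_apply]
          have h5 : (σ • (b - mulVecE A xs)) m = σ * (b m - ⟪rowE A m, xs⟫) := by
            have h6 : (σ • (b - mulVecE A xs)) m = σ * ((b - mulVecE A xs) m) := rfl
            have h7 : (b - mulVecE A xs) m = b m - mulVecE A xs m := rfl
            rw [h6, h7, mulVecE_apply]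
          rw [h5]
          have h8 : ∀ i : Fin M,
              ((σ * (b i - ⟪rowE A i, xs⟫)) • r i).fst m
                = (σ * (b i - ⟪rowE A i, xs⟫)) * (if m = i then (1:ℝ) else 0) := by
            intro i
            rw [WithLp.smul_fst, hrfst]
            have : ((σ * (b i - ⟪rowE A i, xs⟫)) • EuclideanSpace.single i (1:ℝ)) m
                = (σ * (b i - ⟪rowE A i, xs⟫)) * (EuclideanSpace.single i (1:ℝ)) m := rfl
            rw [this, EuclideanSpace.single_apply]
          simp only [h8, mul_ite, mul_one, mul_zero]
          rw [Finset.sum_ite_eq Finset.univ m (fun i => σ * (b i - ⟪rowE A i, xs⟫))]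
          simp
        · rw [withlp_snd_sum, hssnd]
          have h9 : ∀ i : Fin M, ((σ * (b i - ⟪rowE A i, xs⟫)) • r i).snd
              = (σ ^ 2 * (b i - ⟪rowE A i, xs⟫)) • rowE A i := by
            intro i
            rw [WithLp.smul_snd, hrsnd, smul_smul]
            congr 1
            ring
          rw [Finset.sum_congr rfl fun i _ => h9 i]
          exact hxs
      rw [hrep]
      exact Submodule.sum_smul_mem _ _ fun i _ => Submodule.subset_span ⟨i, rfl⟩
    have hγ' : ∀ n, γ n = lam * (σ * b (j n) - ⟪r (j n), z n⟫) / ‖r (j n)‖ ^ 2 := by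
      intro n
      rw [hγ n, hrn, hinner, hzfst, hzsnd, rowE_inner]
      congr 1
      ring
    have hz0 : z 0 = 0 := by
      apply withlp_prod_ext
      · rw [hzfst, hu0, WithLp.zero_fst]
      · rw [hzsnd, hx0, WithLp.zero_snd]
    have hzrec : ∀ n, z (n + 1)
        = z n + ((lam * (σ * b (j n) - ⟪r (j n), z n⟫)) / ‖r (j n)‖ ^ 2) • r (j n) := by
      intro n
      rw [← hγ']
      apply withlp_prod_ext
      · rw [WithLp.add_fst, WithLp.smul_fst, hrfst, hzfst, hzfst, hur n]
      · rw [WithLp.add_snd, WithLp.smul_snd, hrsnd, hzsnd, hzsnd, hxr n, smul_smul,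
          mul_comm (γ n) σ]
    have hconv := kaczmarz M hM r hrne (fun i => σ * b i) lam hlam₀ hlam₂ s hsolves hsV
      j hj z hz0 hzrec
    have hle : ∀ n, ‖x n - xs‖ ≤ ‖z n - s‖ := by
      intro n
      have h1 : x n - xs = (z n - s).snd := by rw [WithLp.sub_snd, hzsnd, hssnd]
      rw [h1]
      exact withlp_snd_norm_le (z n - s)
    rw [tendsto_iff_norm_sub_tendsto_zero]
    exact squeeze_zero (fun n => norm_nonneg _) hle
      (tendsto_iff_norm_sub_tendsto_zero.mp hconv)

end main
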